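/- Let a vector-valued CSP instance with only linear constraints be given, let ε ∈ (0, 1/400), and let π1 : F^k → F^d and π2 : F^{k·m} → F^d be functions with p3 ≥ 1 − 4ε. Suppose σ : Fin k → (Fin d → F) and σ2 : Fin k × Fin m → (Fin d → F) satisfy Δ(π1, PWH(σ)) ≤ 24ε and Δ(π2, PWH(σ2)) ≤ 24ε (where σ2 is viewed as a tuple of k·m vectors in F^d). Then σ2(p,e) = M_e · σ(p) for every p ∈ Fin k and e ∈ Fin m. -/

import Mathlib

open scoped Classical

/-- The probability that a uniformly random element of a finite type `Ω`
satisfies the predicate `P`. -/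
noncomputable def prob {Ω : Type*} [Fintype Ω] (P : Ω → Prop) : ℝ :=
  ((Finset.univ.filter P).card : ℝ) / (Fintype.card Ω : ℝ)

/-- Relative (Hamming) distance between two functions on a finite domain. -/
noncomputable def rdist {A B : Type*} [Fintype A] (f g : A → B) : ℝ :=
  prob (fun a => f a ≠ g a)

/-- The parallel Walsh–Hadamard encoding of an assignment `σ : ι → (Fin d → F)`:
`PWH σ b = ∑ i, b i • σ i`, as a function from `ι → F` to `Fin d → F`. -/
def PWH {F : Type*} [CommRing F] {ι : Type*} [Fintype ι] {d : ℕ}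
    (σ : ι → Fin d → F) : (ι → F) → (Fin d → F) :=
  fun b j => ∑ i, b i * σ i j

section helpers
open Finset


lemma prob_nonneg {Ω : Type*} [Fintype Ω] (P : Ω → Prop) : 0 ≤ prob P := by
  unfold prob; positivity

lemma prob_mono {Ω : Type*} [Fintype Ω] {P Q : Ω → Prop} (h : ∀ x, P x → Q x) :
    prob P ≤ prob Q := by
  unfold prob
  rw [div_eq_mul_inv, div_eq_mul_inv]
  apply mul_le_mul_of_nonneg_right _ (by positivity)
  exact_mod_cast card_le_card (fun x hx => mem_filter.2 ⟨mem_univ x, h x (mem_filter.1 hx).2⟩)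

lemma prob_not {Ω : Type*} [Fintype Ω] [Nonempty Ω] (P : Ω → Prop) :
    prob (fun x => ¬ P x) = 1 - prob P := by
  unfold prob
  have h0 : (0:ℝ) < (Fintype.card Ω : ℝ) := by
    exact_mod_cast Fintype.card_pos
  rw [eq_sub_iff_add_eq, ← add_div, div_eq_one_iff_eq h0.ne']
  norm_cast
  rw [← card_union_of_disjoint]
  · congr 1
    ext x; by_cases h : P x <;> simp [h]
  · simp [disjoint_left]

lemma prob_or {Ω : Type*} [Fintype Ω] (P Q : Ω → Prop) :
    prob (fun x => P x ∨ Q x) ≤ prob P + prob Q := by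
  unfold prob
  rw [← add_div, div_eq_mul_inv, div_eq_mul_inv]
  apply mul_le_mul_of_nonneg_right _ (by positivity)
  exact_mod_cast (card_le_card (by intro x hx; simp at hx ⊢; tauto)).trans (card_union_le _ _)

lemma prob_equiv {Ω Ω' : Type*} [Fintype Ω] [Fintype Ω'] (e : Ω ≃ Ω') (P : Ω' → Prop) :
    prob (fun x => P (e x)) = prob P := by
  unfold prob
  rw [Fintype.card_congr e]
  congr 1
  norm_cast
  apply Finset.card_bij (fun x _ => e x)
  · intro a ha; simpa using (mem_filter.1 ha).2
  · intro a _ b _ h; exact e.injective h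
  · intro b hb; exact ⟨e.symm b, by simpa using (mem_filter.1 hb).2, by simp⟩

lemma prob_fst {A B : Type*} [Fintype A] [Fintype B] [Nonempty B] (P : A → Prop) :
    prob (fun x : A × B => P x.1) = prob P := by
  unfold prob
  rw [Fintype.card_prod]
  have : (Finset.univ.filter fun x : A × B => P x.1) = (Finset.univ.filter P) ×ˢ Finset.univ := by
    ext x; simp
  rw [this, card_product]
  have hB : (0:ℝ) < (Fintype.card B : ℝ) := by exact_mod_cast Fintype.card_pos
  push_cast
  rw [mul_comm ((Fintype.card A : ℝ)) _]
  rw [← div_div]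
  congr 1
  field_simp
  rw [card_univ]

lemma prob_snd {A B : Type*} [Fintype A] [Fintype B] [Nonempty A] (P : B → Prop) :
    prob (fun x : A × B => P x.2) = prob P := by
  rw [← prob_fst (B := A) P, ← prob_equiv (Equiv.prodComm A B) (fun y : B × A => P y.1)]
  rfl


noncomputable def pcard {α : Type*} [Fintype α] (P : α → Prop) : ℕ :=
  (Finset.univ.filter P).card

lemma prob_eq_pcard {Ω : Type*} [Fintype Ω] (P : Ω → Prop) :
    prob P = (pcard P : ℝ) / (Fintype.card Ω : ℝ) := rfl

lemma pcard_mono {α : Type*} [Fintype α] {P Q : α → Prop} (h : ∀ x, P x → Q x) :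
    pcard P ≤ pcard Q := by
  unfold pcard
  exact card_le_card (fun x hx => mem_filter.2 ⟨mem_univ x, h x (mem_filter.1 hx).2⟩)

lemma pcard_le_card {α : Type*} [Fintype α] (P : α → Prop) :
    pcard P ≤ Fintype.card α := by
  unfold pcard
  simpa using card_le_card (filter_subset _ (univ : Finset α))

lemma pcard_prod {A B : Type*} [Fintype A] [Fintype B] (Q : A × B → Prop) :
    pcard Q = ∑ a : A, pcard (fun b => Q (a, b)) := by
  unfold pcard
  rw [Finset.card_eq_sum_card_fiberwise (f := Prod.fst) (t := Finset.univ) (fun x _ => mem_univ _)]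
  apply Finset.sum_congr rfl
  intro a _
  apply Finset.card_bij (fun x _ => x.2)
  · rintro ⟨a1, b1⟩ hx
    simp only [mem_filter, mem_univ, true_and] at hx ⊢
    obtain ⟨hQ, h1⟩ := hx
    subst h1; exact hQ
  · rintro ⟨a1, b1⟩ h1 ⟨a2, b2⟩ h2 h
    simp only [mem_filter, mem_univ, true_and] at h1 h2
    simp_all
  · intro b hb
    simp only [mem_filter, mem_univ, true_and] at hb ⊢
    exact ⟨(a, b), ⟨hb, rfl⟩, rfl⟩

lemma sum_pcard_split {α : Type*} [Fintype α] (T : α → Prop) (f : α → ℕ) (A B : ℕ)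
    (h1 : ∀ a, T a → f a ≤ A) (h2 : ∀ a, ¬T a → f a ≤ B) :
    ∑ a, f a ≤ pcard T * A + (Fintype.card α - pcard T) * B := by
  unfold pcard
  rw [← Finset.sum_filter_add_sum_filter_not Finset.univ T f]
  have e1 : ∑ a ∈ Finset.univ.filter T, f a ≤ (Finset.univ.filter T).card * A := by
    calc ∑ a ∈ Finset.univ.filter T, f a ≤ ∑ _a ∈ Finset.univ.filter T, A :=
          Finset.sum_le_sum (fun a ha => h1 a (mem_filter.1 ha).2)
      _ = (Finset.univ.filter T).card * A := by rw [Finset.sum_const, smul_eq_mul]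
  have e2 : ∑ a ∈ Finset.univ.filter (fun a => ¬ T a), f a
      ≤ (Fintype.card α - (Finset.univ.filter T).card) * B := by
    have hc : (Finset.univ.filter (fun a => ¬ T a)).card
        = Fintype.card α - (Finset.univ.filter T).card := by
      rw [Finset.filter_not, Finset.card_sdiff_of_subset (filter_subset _ _), card_univ]
    calc ∑ a ∈ Finset.univ.filter (fun a => ¬ T a), f a
        ≤ ∑ _a ∈ Finset.univ.filter (fun a => ¬ T a), B :=
          Finset.sum_le_sum (fun a ha => h2 a (mem_filter.1 ha).2)
      _ = _ := by rw [Finset.sum_const, smul_eq_mul, hc]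
  exact add_le_add e1 e2

lemma linform_pcard_mul_le {F : Type*} [Field F] [Fintype F] {ι : Type*} [DecidableEq ι] [Fintype ι]
    (a : ι → F) (i0 : ι) (ha : a i0 ≠ 0) :
    pcard (fun l : ι → F => ∑ i, l i * a i = 0) * Fintype.card F
      ≤ Fintype.card F ^ Fintype.card ι := by
  classical
  unfold pcard
  have key : ((Finset.univ.filter fun l : ι → F => ∑ i, l i * a i = 0) ×ˢ
      (Finset.univ : Finset F)).card ≤ (Finset.univ : Finset (ι → F)).card := by
    apply Finset.card_le_card_of_injOn (fun p => Function.update p.1 i0 p.2)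
    · intro p _; exact mem_univ _
    · rintro ⟨l1, y1⟩ h1 ⟨l2, y2⟩ h2 h
      simp only [mem_coe, mem_product, mem_filter, mem_univ, true_and] at h1 h2
      have hy : y1 = y2 := by
        have := congrFun h i0; simpa using this
      have hoff : ∀ i, i ≠ i0 → l1 i = l2 i := by
        intro i hi
        have := congrFun h i
        simpa [Function.update_of_ne hi] using this
      have hl : l1 = l2 := by
        funext i
        by_cases hi : i = i0
        · subst hi
          have e1 := Finset.add_sum_erase Finset.univ (fun i => l1 i * a i) (mem_univ i)
          have e2 := Finset.add_sum_erase Finset.univ (fun i => l2 i * a i) (mem_univ i)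
          have hsum : ∑ x ∈ Finset.univ.erase i, l1 x * a x
              = ∑ x ∈ Finset.univ.erase i, l2 x * a x := by
            apply Finset.sum_congr rfl
            intro x hx
            rw [hoff x (Finset.mem_erase.1 hx).1]
          have : l1 i * a i = l2 i * a i := by
            have q1 : l1 i * a i + ∑ x ∈ Finset.univ.erase i, l1 x * a x = 0 := by
              rw [e1]; exact h1.1
            have q2 : l2 i * a i + ∑ x ∈ Finset.univ.erase i, l2 x * a x = 0 := by
              rw [e2]; exact h2.1
            rw [hsum] at q1
            linear_combination q1 - q2
          exact mul_right_cancel₀ ha this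
        · exact hoff i hi
      simp [hl, hy]
  simpa [Finset.card_product, Fintype.card_fun] using key

lemma bilinear_prob_le {F : Type*} [Field F] [Fintype F] {k m d : ℕ}
    (c : Fin k × Fin m → Fin d → F) (pe0 : Fin k × Fin m) (hc : c pe0 ≠ 0) :
    prob (fun y : (Fin k → F) × (Fin m → F) =>
        ∑ pe : Fin k × Fin m, (y.1 pe.1 * y.2 pe.2) • c pe = (0 : Fin d → F)) ≤ 3 / 4 := by
  have hq2 : 2 ≤ Fintype.card F := Fintype.one_lt_card
  set q := Fintype.card F with hqdef
  obtain ⟨j0, hj0⟩ : ∃ j, c pe0 j ≠ 0 := by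
    by_contra h; push_neg at h; exact hc (funext fun j => h j)
  set Qp : (Fin k → F) × (Fin m → F) → Prop :=
    fun y => ∑ pe : Fin k × Fin m, (y.1 pe.1 * y.2 pe.2) • c pe = (0 : Fin d → F) with hQp
  set T0 : (Fin k → F) → Prop :=
    fun l => ∀ e, (∑ p, l p • c (p, e)) = (0 : Fin d → F) with hT0
  -- bound on T0
  have ht : pcard T0 * q ≤ q ^ k := by
    have hmono : pcard T0 ≤ pcard (fun l : Fin k → F => ∑ p, l p * (c (p, pe0.2) j0) = 0) := by
      apply pcard_mono
      intro l hl
      have := congrFun (hl pe0.2) j0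
      simpa [Finset.sum_apply] using this
    calc pcard T0 * q
        ≤ pcard (fun l : Fin k → F => ∑ p, l p * (c (p, pe0.2) j0) = 0) * q :=
          Nat.mul_le_mul_right _ hmono
      _ ≤ q ^ Fintype.card (Fin k) :=
          linform_pcard_mul_le (fun p => c (p, pe0.2) j0) pe0.1 (by simpa using hj0)
      _ = q ^ k := by rw [Fintype.card_fin]
  -- bound for l outside T0
  have hn : ∀ l : Fin k → F, ¬ T0 l →
      pcard (fun mu : Fin m → F => Qp (l, mu)) * q ≤ q ^ m := by
    intro l hl
    simp only [hT0, not_forall] at hl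
    obtain ⟨e1, he1⟩ := hl
    obtain ⟨j1, hj1⟩ : ∃ j, (∑ p, l p • c (p, e1)) j ≠ 0 := by
      by_contra h; push_neg at h; exact he1 (funext fun j => h j)
    have hj1' : ∑ p, l p * c (p, e1) j1 ≠ 0 := by
      simpa [Finset.sum_apply] using hj1
    have hmono : pcard (fun mu : Fin m → F => Qp (l, mu)) ≤
        pcard (fun mu : Fin m → F => ∑ e, mu e * (∑ p, l p * c (p, e) j1) = 0) := by
      apply pcard_mono
      intro mu hmu
      have := congrFun hmu j1
      simp only [Finset.sum_apply, Pi.smul_apply, smul_eq_mul, Pi.zero_apply] at this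
      rw [Fintype.sum_prod_type_right] at this
      calc ∑ e, mu e * (∑ p, l p * c (p, e) j1)
          = ∑ e, ∑ p, l p * mu e * c (p, e) j1 := by
            apply Finset.sum_congr rfl; intro e _
            rw [Finset.mul_sum]; apply Finset.sum_congr rfl; intro p _; ring
        _ = 0 := this
    calc pcard (fun mu : Fin m → F => Qp (l, mu)) * q
        ≤ pcard (fun mu : Fin m → F => ∑ e, mu e * (∑ p, l p * c (p, e) j1) = 0) * q :=
          Nat.mul_le_mul_right _ hmono
      _ ≤ q ^ Fintype.card (Fin m) :=
          linform_pcard_mul_le (fun e => ∑ p, l p * c (p, e) j1) e1 hj1'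
      _ = q ^ m := by rw [Fintype.card_fin]
  -- total count
  have hcardF : Fintype.card (Fin k → F) = q ^ k := by
    rw [Fintype.card_fun, Fintype.card_fin]
  have hcardFm : Fintype.card (Fin m → F) = q ^ m := by
    rw [Fintype.card_fun, Fintype.card_fin]
  have hmain : pcard Qp * q ≤ pcard T0 * (q ^ m * q) + (q ^ k - pcard T0) * q ^ m := by
    rw [pcard_prod Qp, Finset.sum_mul]
    have := sum_pcard_split T0 (fun l => pcard (fun mu : Fin m → F => Qp (l, mu)) * q)
      (q ^ m * q) (q ^ m)
      (fun l _ => by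
        have h1 : pcard (fun mu : Fin m → F => Qp (l, mu)) ≤ q ^ m := by
          rw [← hcardFm]; exact pcard_le_card _
        exact Nat.mul_le_mul_right _ h1)
      (fun l hl => hn l hl)
    rw [hcardF] at this
    exact this
  have hT0le : pcard T0 ≤ q ^ k := by rw [← hcardF]; exact pcard_le_card _
  -- real arithmetic
  rw [prob_eq_pcard]
  rw [Fintype.card_prod, hcardF, hcardFm]
  rw [div_le_iff₀ (by positivity)]
  have hQR : (2:ℝ) ≤ (q:ℝ) := by exact_mod_cast hq2
  set t : ℝ := (pcard T0 : ℝ) with htdef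
  set S : ℝ := (pcard Qp : ℝ) with hSdef
  have htR : t * q ≤ (q:ℝ) ^ k := by rw [htdef]; exact_mod_cast ht
  have hmainR : S * q ≤ t * ((q:ℝ) ^ m * q) + ((q:ℝ) ^ k - t) * (q:ℝ) ^ m := by
    have h2 : ((q ^ k - pcard T0 : ℕ) : ℝ) = (q:ℝ) ^ k - t := by
      rw [Nat.cast_sub hT0le]; push_cast; ring
    calc S * q = ((pcard Qp * q : ℕ) : ℝ) := by push_cast; ring
      _ ≤ ((pcard T0 * (q ^ m * q) + (q ^ k - pcard T0) * q ^ m : ℕ) : ℝ) := by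
          exact_mod_cast hmain
      _ = t * ((q:ℝ) ^ m * q) + ((q:ℝ) ^ k - t) * (q:ℝ) ^ m := by
          push_cast [Nat.cast_sub hT0le]; ring
  have hS0 : (0:ℝ) ≤ S := by rw [hSdef]; positivity
  have ht0 : (0:ℝ) ≤ t := by rw [htdef]; positivity
  have hK : (0:ℝ) < (q:ℝ) ^ k := by positivity
  have hM : (0:ℝ) < (q:ℝ) ^ m := by positivity
  push_cast
  nlinarith [mul_le_mul_of_nonneg_right htR hM.le,
    mul_le_mul_of_nonneg_left hmainR (by linarith : (0:ℝ) ≤ (q:ℝ)),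
    mul_pos hK hM, mul_nonneg ht0 hM.le,
    mul_nonneg (mul_nonneg ht0 hM.le) (by linarith : (0:ℝ) ≤ (q:ℝ) - 2),
    mul_nonneg (mul_nonneg hK.le hM.le) (mul_nonneg (by linarith : (0:ℝ) ≤ (q:ℝ) - 2) (by linarith : (0:ℝ) ≤ 3*(q:ℝ) - 2))]


lemma key_alg {F : Type*} [Field F] {k m d : ℕ}
    (M : Fin m → Matrix (Fin d) (Fin d) F) (σ : Fin k → Fin d → F)
    (σ2 : Fin k × Fin m → Fin d → F) (lam a : Fin k → F) (mu : Fin m → F)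
    (b : Fin k × Fin m → F)
    (h : PWH σ2 (b + fun pe : Fin k × Fin m => lam pe.1 * mu pe.2) - PWH σ2 b
      = (∑ e : Fin m, mu e • M e).mulVec (PWH σ (a + lam) - PWH σ a)) :
    ∑ pe : Fin k × Fin m, (lam pe.1 * mu pe.2) • (σ2 pe - (M pe.2).mulVec (σ pe.1))
      = (0 : Fin d → F) := by
  funext j
  have hj := congrFun h j
  simp only [PWH, Pi.sub_apply, Pi.add_apply, Matrix.mulVec, dotProduct,
    Matrix.sum_apply, Matrix.smul_apply, smul_eq_mul] at hj
  have I1 : ∑ pe : Fin k × Fin m, (b pe + lam pe.1 * mu pe.2) * σ2 pe j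
      - ∑ pe : Fin k × Fin m, b pe * σ2 pe j
      = ∑ pe : Fin k × Fin m, (lam pe.1 * mu pe.2) * σ2 pe j := by
    rw [← Finset.sum_sub_distrib]
    apply Finset.sum_congr rfl
    intro pe _
    ring
  have I2 : ∑ i, (∑ e, mu e * M e j i) * ((∑ p, (a p + lam p) * σ p i) - ∑ p, a p * σ p i)
      = ∑ pe : Fin k × Fin m, (lam pe.1 * mu pe.2) * (∑ i, M pe.2 j i * σ pe.1 i) := by
    have inner : ∀ i, (∑ p, (a p + lam p) * σ p i) - ∑ p, a p * σ p i
        = ∑ p, lam p * σ p i := by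
      intro i
      rw [← Finset.sum_sub_distrib]
      apply Finset.sum_congr rfl
      intro p _
      ring
    calc ∑ i, (∑ e, mu e * M e j i) * ((∑ p, (a p + lam p) * σ p i) - ∑ p, a p * σ p i)
        = ∑ i, ∑ e, ∑ p, (mu e * M e j i) * (lam p * σ p i) := by
          apply Finset.sum_congr rfl
          intro i _
          rw [inner i, Finset.sum_mul_sum]
      _ = ∑ e, ∑ p, ∑ i, (mu e * M e j i) * (lam p * σ p i) := by
          rw [Finset.sum_comm]
          apply Finset.sum_congr rfl
          intro e _
          rw [Finset.sum_comm]
      _ = ∑ pe : Fin k × Fin m, (lam pe.1 * mu pe.2) * (∑ i, M pe.2 j i * σ pe.1 i) := by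
          rw [Fintype.sum_prod_type_right]
          apply Finset.sum_congr rfl
          intro e _
          apply Finset.sum_congr rfl
          intro p _
          rw [Finset.mul_sum]
          apply Finset.sum_congr rfl
          intro i _
          ring
  rw [I1, I2] at hj
  calc (∑ pe : Fin k × Fin m, (lam pe.1 * mu pe.2) • (σ2 pe - (M pe.2).mulVec (σ pe.1))) j
      = ∑ pe : Fin k × Fin m, ((lam pe.1 * mu pe.2) * σ2 pe j
          - (lam pe.1 * mu pe.2) * (∑ i, M pe.2 j i * σ pe.1 i)) := by
        rw [Finset.sum_apply]
        apply Finset.sum_congr rfl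
        intro pe _
        simp [Matrix.mulVec, dotProduct, mul_sub]
    _ = ∑ pe : Fin k × Fin m, (lam pe.1 * mu pe.2) * σ2 pe j
        - ∑ pe : Fin k × Fin m, (lam pe.1 * mu pe.2) * (∑ i, M pe.2 j i * σ pe.1 i) := by
        rw [Finset.sum_sub_distrib]
    _ = 0 := by rw [hj]; ring
end helpers

theorem linear_pcpp_matrix_test {F : Type*} [Field F] [Fintype F] [CharP F 2]
    {k m d : ℕ} (hk : 1 ≤ k) (hm : 1 ≤ m) (hd : 1 ≤ d)
    (u v : Fin m → Fin k) (M : Fin m → Matrix (Fin d) (Fin d) F)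
    {ε : ℝ} (hε0 : 0 < ε) (hε1 : ε < 1 / 400)
    (π1 : (Fin k → F) → (Fin d → F)) (π2 : (Fin k × Fin m → F) → (Fin d → F))
    (hp3 :
      prob (fun x : (Fin k → F) × (Fin k → F) × (Fin m → F) × (Fin k × Fin m → F) =>
          π2 (x.2.2.2 + fun pe : Fin k × Fin m => x.1 pe.1 * x.2.2.1 pe.2) - π2 x.2.2.2
            = (∑ e : Fin m, x.2.2.1 e • M e).mulVec (π1 (x.2.1 + x.1) - π1 x.2.1))
        ≥ 1 - 4 * ε)
    (σ : Fin k → Fin d → F) (σ2 : Fin k × Fin m → Fin d → F)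
    (h1 : rdist π1 (PWH σ) ≤ 24 * ε) (h2 : rdist π2 (PWH σ2) ≤ 24 * ε) :
    ∀ (p : Fin k) (e : Fin m), σ2 (p, e) = (M e).mulVec (σ p) := by
  intro p e
  by_contra hne
  set c : Fin k × Fin m → Fin d → F :=
    fun pe => σ2 pe - (M pe.2).mulVec (σ pe.1) with hcdef
  have hc : c (p, e) ≠ 0 := sub_ne_zero.2 hne
  set Ω := (Fin k → F) × (Fin k → F) × (Fin m → F) × (Fin k × Fin m → F) with hΩ
  set E : Ω → Prop := fun x =>
    ∑ pe : Fin k × Fin m, (x.1 pe.1 * x.2.2.1 pe.2) • c pe = (0 : Fin d → F) with hE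
  have hadd1 : ∀ lam y : Fin k → F, y + lam + lam = y := by
    intro lam y; funext i
    simp [add_assoc, CharTwo.add_self_eq_zero]
  have hadd2 : ∀ g y : Fin k × Fin m → F, y + g + g = y := by
    intro g y; funext i
    simp [add_assoc, CharTwo.add_self_eq_zero]
  -- upper bound on prob E
  have hupper : prob E ≤ 3 / 4 := by
    calc prob E
        = prob (fun y : ((Fin k → F) × (Fin m → F)) ×
            ((Fin k → F) × (Fin k × Fin m → F)) =>
            ∑ pe : Fin k × Fin m, (y.1.1 pe.1 * y.1.2 pe.2) • c pe = (0 : Fin d → F)) :=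
          prob_equiv
            (⟨fun x => ((x.1, x.2.2.1), (x.2.1, x.2.2.2)),
              fun y => (y.1.1, (y.2.1, (y.1.2, y.2.2))),
              fun x => rfl, fun y => rfl⟩ :
              Ω ≃ ((Fin k → F) × (Fin m → F)) × ((Fin k → F) × (Fin k × Fin m → F)))
            (fun y => ∑ pe : Fin k × Fin m, (y.1.1 pe.1 * y.1.2 pe.2) • c pe = (0 : Fin d → F))
      _ = prob (fun z : (Fin k → F) × (Fin m → F) =>
            ∑ pe : Fin k × Fin m, (z.1 pe.1 * z.2 pe.2) • c pe = (0 : Fin d → F)) :=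
          prob_fst (fun z : (Fin k → F) × (Fin m → F) =>
            ∑ pe : Fin k × Fin m, (z.1 pe.1 * z.2 pe.2) • c pe = (0 : Fin d → F))
      _ ≤ 3 / 4 := bilinear_prob_le c (p, e) hc
  -- lower bound on prob E
  have hG1 : prob (fun x : Ω => π1 x.2.1 ≠ PWH σ x.2.1) ≤ 24 * ε := by
    calc prob (fun x : Ω => π1 x.2.1 ≠ PWH σ x.2.1)
        = prob (fun y : (Fin k → F) × (Fin m → F) × (Fin k × Fin m → F) =>
            π1 y.1 ≠ PWH σ y.1) :=
          prob_snd (fun y : (Fin k → F) × (Fin m → F) × (Fin k × Fin m → F) =>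
            π1 y.1 ≠ PWH σ y.1)
      _ = prob (fun z : Fin k → F => π1 z ≠ PWH σ z) :=
          prob_fst (fun z : Fin k → F => π1 z ≠ PWH σ z)
      _ ≤ 24 * ε := h1
  have hG3 : prob (fun x : Ω => π2 x.2.2.2 ≠ PWH σ2 x.2.2.2) ≤ 24 * ε := by
    calc prob (fun x : Ω => π2 x.2.2.2 ≠ PWH σ2 x.2.2.2)
        = prob (fun y : (Fin k → F) × (Fin m → F) × (Fin k × Fin m → F) =>
            π2 y.2.2 ≠ PWH σ2 y.2.2) :=
          prob_snd (fun y : (Fin k → F) × (Fin m → F) × (Fin k × Fin m → F) =>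
            π2 y.2.2 ≠ PWH σ2 y.2.2)
      _ = prob (fun z : (Fin m → F) × (Fin k × Fin m → F) =>
            π2 z.2 ≠ PWH σ2 z.2) :=
          prob_snd (fun z : (Fin m → F) × (Fin k × Fin m → F) => π2 z.2 ≠ PWH σ2 z.2)
      _ = prob (fun w : Fin k × Fin m → F => π2 w ≠ PWH σ2 w) :=
          prob_snd (fun w : Fin k × Fin m → F => π2 w ≠ PWH σ2 w)
      _ ≤ 24 * ε := h2
  have hG2 : prob (fun x : Ω => π1 (x.2.1 + x.1) ≠ PWH σ (x.2.1 + x.1)) ≤ 24 * ε := by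
    calc prob (fun x : Ω => π1 (x.2.1 + x.1) ≠ PWH σ (x.2.1 + x.1))
        = prob (fun x : Ω => π1 x.2.1 ≠ PWH σ x.2.1) :=
          prob_equiv
            (⟨fun x => (x.1, (x.2.1 + x.1, x.2.2)),
              fun x => (x.1, (x.2.1 + x.1, x.2.2)),
              fun x => by simp [hadd1], fun x => by simp [hadd1]⟩ : Ω ≃ Ω)
            (fun x : Ω => π1 x.2.1 ≠ PWH σ x.2.1)
      _ ≤ 24 * ε := hG1
  have hG4 : prob (fun x : Ω =>
      π2 (x.2.2.2 + fun pe : Fin k × Fin m => x.1 pe.1 * x.2.2.1 pe.2)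
        ≠ PWH σ2 (x.2.2.2 + fun pe : Fin k × Fin m => x.1 pe.1 * x.2.2.1 pe.2)) ≤ 24 * ε := by
    calc prob (fun x : Ω =>
          π2 (x.2.2.2 + fun pe : Fin k × Fin m => x.1 pe.1 * x.2.2.1 pe.2)
            ≠ PWH σ2 (x.2.2.2 + fun pe : Fin k × Fin m => x.1 pe.1 * x.2.2.1 pe.2))
        = prob (fun x : Ω => π2 x.2.2.2 ≠ PWH σ2 x.2.2.2) :=
          prob_equiv
            (⟨fun x => (x.1, (x.2.1, (x.2.2.1,
                x.2.2.2 + fun pe : Fin k × Fin m => x.1 pe.1 * x.2.2.1 pe.2))),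
              fun x => (x.1, (x.2.1, (x.2.2.1,
                x.2.2.2 + fun pe : Fin k × Fin m => x.1 pe.1 * x.2.2.1 pe.2))),
              fun x => by simp [hadd2], fun x => by simp [hadd2]⟩ : Ω ≃ Ω)
            (fun x : Ω => π2 x.2.2.2 ≠ PWH σ2 x.2.2.2)
      _ ≤ 24 * ε := hG3
  set PA : Ω → Prop := fun x =>
    π2 (x.2.2.2 + fun pe : Fin k × Fin m => x.1 pe.1 * x.2.2.1 pe.2) - π2 x.2.2.2
      = (∑ e : Fin m, x.2.2.1 e • M e).mulVec (π1 (x.2.1 + x.1) - π1 x.2.1) with hPA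
  have hPAbad : prob (fun x : Ω => ¬ PA x) ≤ 4 * ε := by
    rw [prob_not]
    linarith [hp3]
  -- good implies E
  have himp : ∀ x : Ω, ¬ E x →
      (¬ PA x ∨ (π1 x.2.1 ≠ PWH σ x.2.1 ∨ (π1 (x.2.1 + x.1) ≠ PWH σ (x.2.1 + x.1) ∨
       (π2 x.2.2.2 ≠ PWH σ2 x.2.2.2 ∨
        π2 (x.2.2.2 + fun pe : Fin k × Fin m => x.1 pe.1 * x.2.2.1 pe.2)
          ≠ PWH σ2 (x.2.2.2 + fun pe : Fin k × Fin m => x.1 pe.1 * x.2.2.1 pe.2))))) := by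
    intro x hEx
    by_contra hcon
    push_neg at hcon
    obtain ⟨hA, hg1, hg2, hg3, hg4⟩ := hcon
    apply hEx
    have hA' := hA
    rw [hPA] at hA'
    rw [hg1, hg2, hg3, hg4] at hA'
    exact key_alg M σ σ2 x.1 x.2.1 x.2.2.1 x.2.2.2 hA'
  have hbadE : prob (fun x : Ω => ¬ E x) ≤ 100 * ε := by
    have t4 : prob (fun x : Ω =>
        π2 x.2.2.2 ≠ PWH σ2 x.2.2.2 ∨
        π2 (x.2.2.2 + fun pe : Fin k × Fin m => x.1 pe.1 * x.2.2.1 pe.2)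
          ≠ PWH σ2 (x.2.2.2 + fun pe : Fin k × Fin m => x.1 pe.1 * x.2.2.1 pe.2))
        ≤ 24 * ε + 24 * ε :=
      le_trans (prob_or _ _) (add_le_add hG3 hG4)
    have t3 : prob (fun x : Ω =>
        π1 (x.2.1 + x.1) ≠ PWH σ (x.2.1 + x.1) ∨
        (π2 x.2.2.2 ≠ PWH σ2 x.2.2.2 ∨
        π2 (x.2.2.2 + fun pe : Fin k × Fin m => x.1 pe.1 * x.2.2.1 pe.2)
          ≠ PWH σ2 (x.2.2.2 + fun pe : Fin k × Fin m => x.1 pe.1 * x.2.2.1 pe.2)))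
        ≤ 24 * ε + (24 * ε + 24 * ε) :=
      le_trans (prob_or _ _) (add_le_add hG2 t4)
    have t2 : prob (fun x : Ω =>
        π1 x.2.1 ≠ PWH σ x.2.1 ∨
        (π1 (x.2.1 + x.1) ≠ PWH σ (x.2.1 + x.1) ∨
        (π2 x.2.2.2 ≠ PWH σ2 x.2.2.2 ∨
        π2 (x.2.2.2 + fun pe : Fin k × Fin m => x.1 pe.1 * x.2.2.1 pe.2)
          ≠ PWH σ2 (x.2.2.2 + fun pe : Fin k × Fin m => x.1 pe.1 * x.2.2.1 pe.2))))
        ≤ 24 * ε + (24 * ε + (24 * ε + 24 * ε)) :=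
      le_trans (prob_or _ _) (add_le_add hG1 t3)
    have t1 : prob (fun x : Ω =>
        ¬ PA x ∨ (π1 x.2.1 ≠ PWH σ x.2.1 ∨
        (π1 (x.2.1 + x.1) ≠ PWH σ (x.2.1 + x.1) ∨
        (π2 x.2.2.2 ≠ PWH σ2 x.2.2.2 ∨
        π2 (x.2.2.2 + fun pe : Fin k × Fin m => x.1 pe.1 * x.2.2.1 pe.2)
          ≠ PWH σ2 (x.2.2.2 + fun pe : Fin k × Fin m => x.1 pe.1 * x.2.2.1 pe.2)))))
        ≤ 4 * ε + (24 * ε + (24 * ε + (24 * ε + 24 * ε))) :=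
      le_trans (prob_or _ _) (add_le_add hPAbad t2)
    have := le_trans (prob_mono himp) t1
    linarith
  have hlower : 1 - 100 * ε ≤ prob E := by
    have hnotE := prob_not E
    have hEnot : prob E = 1 - prob (fun x : Ω => ¬ E x) := by
      rw [hnotE]; ring
    rw [hEnot]
    linarith
  linarith
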